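/- Define 2×2 matrices A(z,x) = [[−v, z² + yz + y² + x/2],[4(z−y), v]] and B(z,x) = [[0, z/2 + y],[2, 0]], where y and v are differentiable functions of x. Then the zero-curvature equation ∂A/∂x − ∂B/∂z + AB − BA = 0 holds identically in z if and only if y' = v and v' = 6y² + x (so that y satisfies the first Painlevé equation y'' = 6y² + x). -/

import Mathlib

open Matrix

/-- The zero-curvature equation for the Painlevé I Lax pair holds identically in the
spectral variable `z` iff `y' = v` and `v' = 6y² + x`; in particular these equations
imply the Painlevé I equation `y'' = 6y² + x`. -/
theorem PI_zero_curvature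
    (y v : ℂ → ℂ) (hy : Differentiable ℂ y) (hv : Differentiable ℂ v)
    (A B : ℂ → ℂ → Matrix (Fin 2) (Fin 2) ℂ)
    (hA : ∀ z x, A z x = !![-(v x), z^2 + y x * z + (y x)^2 + x/2;
                            4*(z - y x), v x])
    (hB : ∀ z x, B z x = !![0, z/2 + y x; 2, 0]) :
    ((∀ z x, (Matrix.of fun i j => deriv (fun t => A z t i j) x)
        - (Matrix.of fun i j => deriv (fun t => B t x i j) z)
        + A z x * B z x - B z x * A z x = 0)
      ↔ (∀ x, deriv y x = v x ∧ deriv v x = 6 * (y x)^2 + x))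
    ∧ ((∀ x, deriv y x = v x ∧ deriv v x = 6 * (y x)^2 + x)
      → ∀ x, deriv (deriv y) x = 6 * (y x)^2 + x) := by
  have dA00 : ∀ z x : ℂ, deriv (fun t => A z t 0 0) x = -(deriv v x) := by
    intro z x
    have : (fun t => A z t 0 0) = fun t => -(v t) := funext fun t => by rw [hA]; simp
    rw [this, deriv.fun_neg]
  have dA11 : ∀ z x : ℂ, deriv (fun t => A z t 1 1) x = deriv v x := by
    intro z x
    have : (fun t => A z t 1 1) = fun t => v t := funext fun t => by rw [hA]; simp
    rw [this]
  have dA01 : ∀ z x : ℂ, deriv (fun t => A z t 0 1) x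
      = deriv y x * z + 2 * y x * deriv y x + 1/2 := by
    intro z x
    have : (fun t => A z t 0 1) = fun t => z^2 + y t * z + (y t)^2 + t/2 :=
      funext fun t => by rw [hA]; simp
    rw [this]
    have hy' := (hy x).hasDerivAt
    have h1 : HasDerivAt (fun t : ℂ => z^2 + y t * z + (y t)^2 + t/2)
        (0 + deriv y x * z + (↑2 * y x ^ 1 * deriv y x) + 1/2) x := by
      exact (((hasDerivAt_const x (z^2)).add (hy'.mul_const z)).add (hy'.pow 2)).add
        ((hasDerivAt_id x).div_const 2)
    rw [h1.deriv]; ring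
  have dA10 : ∀ z x : ℂ, deriv (fun t => A z t 1 0) x = -(4 * deriv y x) := by
    intro z x
    have : (fun t => A z t 1 0) = fun t => 4 * (z - y t) := funext fun t => by rw [hA]; simp
    rw [this]
    have h1 : HasDerivAt (fun t : ℂ => 4 * (z - y t)) (4 * (0 - deriv y x)) x :=
      ((hasDerivAt_const x z).sub (hy x).hasDerivAt).const_mul 4
    rw [h1.deriv]; ring
  have dB00 : ∀ z x : ℂ, deriv (fun t => B t x 0 0) z = 0 := by
    intro z x
    have : (fun t => B t x 0 0) = fun _ => (0:ℂ) := funext fun t => by rw [hB]; simp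
    rw [this, deriv_const]
  have dB10 : ∀ z x : ℂ, deriv (fun t => B t x 1 0) z = 0 := by
    intro z x
    have : (fun t => B t x 1 0) = fun _ => (2:ℂ) := funext fun t => by rw [hB]; simp
    rw [this, deriv_const]
  have dB11 : ∀ z x : ℂ, deriv (fun t => B t x 1 1) z = 0 := by
    intro z x
    have : (fun t => B t x 1 1) = fun _ => (0:ℂ) := funext fun t => by rw [hB]; simp
    rw [this, deriv_const]
  have dB01 : ∀ z x : ℂ, deriv (fun t => B t x 0 1) z = 1/2 := by
    intro z x
    have : (fun t => B t x 0 1) = fun t => t/2 + y x := funext fun t => by rw [hB]; simp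
    rw [this]
    have h1 : HasDerivAt (fun t : ℂ => t/2 + y x) (1/2 + 0) z :=
      ((hasDerivAt_id z).div_const 2).add (hasDerivAt_const z (y x))
    rw [h1.deriv]; ring
  have main : (∀ z x, (Matrix.of fun i j => deriv (fun t => A z t i j) x)
        - (Matrix.of fun i j => deriv (fun t => B t x i j) z)
        + A z x * B z x - B z x * A z x = 0)
      ↔ (∀ x, deriv y x = v x ∧ deriv v x = 6 * (y x)^2 + x) := by
    constructor
    · intro h x
      have H := h 0 x
      have h10 := congrFun (congrFun H 1) 0
      have h00 := congrFun (congrFun H 0) 0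
      simp only [Matrix.sub_apply, Matrix.add_apply, Matrix.of_apply, Matrix.mul_apply,
        Fin.sum_univ_two, dA10, dB10, dA00, dB00, hA, hB, Matrix.zero_apply] at h10 h00
      simp at h10 h00
      have hyv : deriv y x = v x := by linear_combination (-(1:ℂ)/4) * h10
      refine ⟨hyv, ?_⟩
      linear_combination -h00
    · intro h z x
      obtain ⟨h1, h2⟩ := h x
      ext i j
      fin_cases i <;> fin_cases j <;>
        simp only [Fin.mk_zero, Fin.mk_one, Matrix.sub_apply, Matrix.add_apply, Matrix.of_apply,
          dA00, dA01, dA10, dA11, dB00, dB01, dB10, dB11] <;>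
        simp [hA, hB, Matrix.mul_apply, Fin.sum_univ_two, h1, h2] <;>
        ring
  refine ⟨main, fun h x => ?_⟩
  have hyv : deriv y = v := funext fun t => (h t).1
  rw [hyv]; exact (h x).2
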